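/- For every positive integer n, as formal power series in z (with coefficients polynomials in q and t): ∑_{k≥0} O(n+k-1, k) z^k q^k = (−t z q^2; q)_{n−1} / (z q; q)_n, where O(n+k-1, k) is the over-(q,t)-binomial coefficient for the (n−1)×k rectangle, and (a;q)_j = ∏_{i=0}^{j−1}(1−a q^i). -/

import Mathlib

open Finset Polynomial

/-- `overp m n k N` is the number of overpartitions of `N` with `k` overlined parts,
largest part `≤ m`, and at most `n` parts. An overpartition is a partition together
with a subset of its (distinct) part sizes which are overlined. -/
noncomputable def overp (m n k N : ℕ) : ℕ :=
  Nat.card {p : Nat.Partition N × Finset ℕ //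
    (∀ i ∈ p.1.parts, i ≤ m) ∧ Multiset.card p.1.parts ≤ n ∧
    p.2 ⊆ p.1.parts.toFinset ∧ p.2.card = k}

/-- The defining condition of `overp`. -/
def OPc (m n k N : ℕ) (p : Nat.Partition N × Finset ℕ) : Prop :=
  (∀ i ∈ p.1.parts, i ≤ m) ∧ Multiset.card p.1.parts ≤ n ∧
    p.2 ⊆ p.1.parts.toFinset ∧ p.2.card = k

lemma overp_def (m n k N : ℕ) :
    overp m n k N = Nat.card {p : Nat.Partition N × Finset ℕ // OPc m n k N p} := rfl

lemma overp_eq_zero_of_lt {m n k N : ℕ} (h : m * n < N) : overp m n k N = 0 := by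
  rw [overp_def]
  rw [Nat.card_eq_zero]
  left
  constructor
  rintro ⟨⟨p, S⟩, hle, hcard, -, -⟩
  have : p.parts.sum ≤ Multiset.card p.parts * m :=
    Multiset.sum_le_card_nsmul p.parts m hle
  rw [p.parts_sum] at this
  have : N ≤ m * n := le_trans this (by
    calc Multiset.card p.parts * m ≤ n * m := Nat.mul_le_mul_right m hcard
    _ = m * n := Nat.mul_comm _ _)
  omega

lemma overp_eq_zero_of_k {m n k N : ℕ} (h : n < k) : overp m n k N = 0 := by
  rw [overp_def, Nat.card_eq_zero]
  left
  constructor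
  rintro ⟨⟨p, S⟩, hle, hcard, hsub, hk⟩
  dsimp only at hle hcard hsub hk
  have h1 : S.card ≤ p.parts.toFinset.card := Finset.card_le_card hsub
  have h2 : p.parts.toFinset.card ≤ Multiset.card p.parts := Multiset.toFinset_card_le _
  omega

lemma overp_zero_N (m n k : ℕ) : overp m n k 0 = if k = 0 then 1 else 0 := by
  have hparts : ∀ p : Nat.Partition 0, p.parts = 0 := by
    intro p
    by_contra h
    obtain ⟨a, ha⟩ := Multiset.exists_mem_of_ne_zero h
    have := p.parts_pos ha
    have hs := p.parts_sum
    have : a ≤ Multiset.sum p.parts := Multiset.single_le_sum (fun a _ => Nat.zero_le a) a ha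
    omega
  split_ifs with hk
  · subst hk
    rw [overp_def, Nat.card_eq_one_iff_unique]
    constructor
    · constructor
      rintro ⟨⟨p, S⟩, -, -, hsub, -⟩ ⟨⟨q, T⟩, -, -, hsub', -⟩
      have hS : S = ∅ := by
        have := hparts p; rw [this] at hsub; simpa using Finset.subset_empty.mp (by simpa using hsub)
      have hT : T = ∅ := by
        have := hparts q; rw [this] at hsub'; simpa using Finset.subset_empty.mp (by simpa using hsub')
      subst hS hT
      congr 1
      apply Prod.ext
      · apply Nat.Partition.ext; rw [hparts p, hparts q]
      · rfl
    · exact ⟨⟨(⟨0, by simp, by simp⟩, ∅), by simp [OPc]⟩⟩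
  · rw [overp_def, Nat.card_eq_zero]
    left
    constructor
    rintro ⟨⟨p, S⟩, -, -, hsub, hcard⟩
    have := hparts p
    rw [this] at hsub
    have : S = ∅ := Finset.subset_empty.mp (by simpa using hsub)
    subst this
    simp at hcard
    omega

lemma overp_succ_small {m n k N : ℕ} (h : N ≤ m) : overp (m+1) n k N = overp m n k N := by
  rw [overp_def, overp_def]
  apply Nat.card_congr
  apply Equiv.subtypeEquivRight
  rintro ⟨p, S⟩
  unfold OPc
  constructor
  · rintro ⟨h1, h2⟩
    refine ⟨fun i hi => ?_, h2⟩
    have : i ≤ N := by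
      rw [← p.parts_sum]
      exact Multiset.single_le_sum (fun a _ => Nat.zero_le a) i hi
    omega
  · rintro ⟨h1, h2⟩
    exact ⟨fun i hi => le_trans (h1 i hi) (Nat.le_succ m), h2⟩

/-- add a part `s` to a partition -/
def padd (s : ℕ) (hs : 0 < s) {M : ℕ} (p : Nat.Partition M) : Nat.Partition (M + s) where
  parts := s ::ₘ p.parts
  parts_pos := fun hi => by
    rcases Multiset.mem_cons.mp hi with rfl | h
    · exact hs
    · exact p.parts_pos h
  parts_sum := by rw [Multiset.sum_cons, p.parts_sum, add_comm]

/-- remove a part `s` from a partition -/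
def perase {M s : ℕ} (p : Nat.Partition (M + s)) (h : s ∈ p.parts) : Nat.Partition M where
  parts := p.parts.erase s
  parts_pos := fun hi => p.parts_pos (Multiset.mem_of_mem_erase hi)
  parts_sum := by
    have h1 : s + (p.parts.erase s).sum = M + s := by
      rw [← Multiset.sum_cons, Multiset.cons_erase h, p.parts_sum]
    omega

def E1 (m k j M : ℕ) :
    {a : Nat.Partition (M + (m+1)) × Finset ℕ // OPc (m+1) (k+1) j (M + (m+1)) a ∧
      (m+1) ∈ a.1.parts ∧ ¬((m+1) ∈ a.2 ∧ a.1.parts.count (m+1) = 1)} ≃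
    {a : Nat.Partition M × Finset ℕ // OPc (m+1) k j M a} where
  toFun x := ⟨(perase x.1.1 x.2.2.1, x.1.2), by
    obtain ⟨⟨p, S⟩, ⟨h1, h2, h3, h4⟩, hs, hns⟩ := x
    dsimp only at h1 h2 h3 h4 hs hns ⊢
    refine ⟨fun i hi => h1 i (Multiset.mem_of_mem_erase hi), ?_, ?_, h4⟩
    · show Multiset.card (p.parts.erase (m+1)) ≤ k
      rw [Multiset.card_erase_of_mem hs]
      exact Nat.pred_le_pred h2
    · intro a ha
      have hap : a ∈ p.parts := Multiset.mem_toFinset.mp (h3 ha)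
      rcases eq_or_ne a (m+1) with rfl | hne
      · have hc1 : p.parts.count (m+1) ≠ 1 := fun hc => hns ⟨ha, hc⟩
        have hc2 : 1 ≤ p.parts.count (m+1) := Multiset.one_le_count_iff_mem.mpr hs
        have : 0 < (p.parts.erase (m+1)).count (m+1) := by
          rw [Multiset.count_erase_self]; omega
        exact Multiset.mem_toFinset.mpr (Multiset.count_pos.mp this)
      · exact Multiset.mem_toFinset.mpr ((Multiset.mem_erase_of_ne hne).mpr hap)⟩
  invFun y := ⟨(padd (m+1) (Nat.succ_pos m) y.1.1, y.1.2), by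
    obtain ⟨⟨p, S⟩, h1, h2, h3, h4⟩ := y
    dsimp only at h1 h2 h3 h4 ⊢
    refine ⟨⟨fun i hi => ?_, ?_, ?_, h4⟩, ?_, ?_⟩
    · rcases Multiset.mem_cons.mp hi with rfl | h
      · exact le_refl _
      · exact h1 i h
    · simp only [padd, Multiset.card_cons]; omega
    · intro a ha
      have := h3 ha
      simp only [padd, Multiset.toFinset_cons]
      exact Finset.mem_insert_of_mem (by simpa using this)
    · exact Multiset.mem_cons_self _ _
    · rintro ⟨hsS, hc⟩
      have : (m+1) ∈ p.parts := Multiset.mem_toFinset.mp (h3 hsS)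
      have h5 : 1 ≤ p.parts.count (m+1) := Multiset.one_le_count_iff_mem.mpr this
      rw [show (padd (m+1) (Nat.succ_pos m) p).1 = (m+1) ::ₘ p.parts from rfl,
        Multiset.count_cons_self] at hc
      omega⟩
  left_inv x := by
    obtain ⟨⟨p, S⟩, h, hs, hns⟩ := x
    apply Subtype.ext
    apply Prod.ext
    · apply Nat.Partition.ext
      show (m+1) ::ₘ (p.parts.erase (m+1)) = p.parts
      exact Multiset.cons_erase hs
    · rfl
  right_inv y := by
    obtain ⟨⟨p, S⟩, h⟩ := y
    apply Subtype.ext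
    apply Prod.ext
    · apply Nat.Partition.ext
      show ((m+1) ::ₘ p.parts).erase (m+1) = p.parts
      exact Multiset.erase_cons_head _ _
    · rfl

def E2 (m k j M : ℕ) :
    {a : Nat.Partition (M + (m+1)) × Finset ℕ // OPc (m+1) (k+1) (j+1) (M + (m+1)) a ∧
      (m+1) ∈ a.1.parts ∧ ((m+1) ∈ a.2 ∧ a.1.parts.count (m+1) = 1)} ≃
    {a : Nat.Partition M × Finset ℕ // OPc m k j M a} where
  toFun x := ⟨(perase x.1.1 x.2.2.1, x.1.2.erase (m+1)), by
    obtain ⟨⟨p, S⟩, ⟨h1, h2, h3, h4⟩, hs, hS, hc⟩ := x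
    dsimp only at h1 h2 h3 h4 hs hS hc ⊢
    have hnotmem : (m+1) ∉ p.parts.erase (m+1) := by
      rw [← Multiset.count_eq_zero, Multiset.count_erase_self, hc]
    refine ⟨fun i hi => ?_, ?_, ?_, ?_⟩
    · have h5 := h1 i (Multiset.mem_of_mem_erase hi)
      have : i ≠ m+1 := fun h => hnotmem (h ▸ hi)
      omega
    · show Multiset.card (p.parts.erase (m+1)) ≤ k
      rw [Multiset.card_erase_of_mem hs]
      exact Nat.pred_le_pred h2
    · intro a ha
      obtain ⟨hne, haS⟩ := Finset.mem_erase.mp ha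
      have hap : a ∈ p.parts := Multiset.mem_toFinset.mp (h3 haS)
      exact Multiset.mem_toFinset.mpr ((Multiset.mem_erase_of_ne hne).mpr hap)
    · rw [Finset.card_erase_of_mem hS, h4]
      rfl⟩
  invFun y := ⟨(padd (m+1) (Nat.succ_pos m) y.1.1, insert (m+1) y.1.2), by
    obtain ⟨⟨p, S⟩, h1, h2, h3, h4⟩ := y
    dsimp only at h1 h2 h3 h4 ⊢
    have hnp : (m+1) ∉ p.parts := fun h => by have := h1 _ h; omega
    have hnS : (m+1) ∉ S := fun h => hnp (Multiset.mem_toFinset.mp (h3 h))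
    refine ⟨⟨fun i hi => ?_, ?_, ?_, ?_⟩, ?_, ?_, ?_⟩
    · rcases Multiset.mem_cons.mp hi with rfl | h
      · exact le_refl _
      · exact le_trans (h1 i h) (Nat.le_succ m)
    · show Multiset.card ((m+1) ::ₘ p.parts) ≤ k + 1
      rw [Multiset.card_cons]; omega
    · intro a ha
      show a ∈ ((m+1) ::ₘ p.parts).toFinset
      rw [Multiset.toFinset_cons]
      rcases Finset.mem_insert.mp ha with rfl | h
      · exact Finset.mem_insert_self _ _
      · exact Finset.mem_insert_of_mem (h3 h)
    · rw [Finset.card_insert_of_notMem hnS, h4]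
    · exact Multiset.mem_cons_self _ _
    · exact Finset.mem_insert_self _ _
    · show ((m+1) ::ₘ p.parts).count (m+1) = 1
      rw [Multiset.count_cons_self, Multiset.count_eq_zero_of_notMem hnp]⟩
  left_inv x := by
    obtain ⟨⟨p, S⟩, h, hs, hS, hc⟩ := x
    apply Subtype.ext
    apply Prod.ext
    · apply Nat.Partition.ext
      show (m+1) ::ₘ (p.parts.erase (m+1)) = p.parts
      exact Multiset.cons_erase hs
    · show insert (m+1) (S.erase (m+1)) = S
      exact Finset.insert_erase hS
  right_inv y := by
    obtain ⟨⟨p, S⟩, h1, h2, h3, h4⟩ := y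
    have hnp : (m+1) ∉ p.parts := fun h => by have := h1 _ h; omega
    have hnS : (m+1) ∉ S := fun h => hnp (Multiset.mem_toFinset.mp (h3 h))
    apply Subtype.ext
    apply Prod.ext
    · apply Nat.Partition.ext
      show ((m+1) ::ₘ p.parts).erase (m+1) = p.parts
      exact Multiset.erase_cons_head _ _
    · show (insert (m+1) S).erase (m+1) = S
      exact Finset.erase_insert hnS

instance OPfin (m n k N : ℕ) : Finite {p : Nat.Partition N × Finset ℕ // OPc m n k N p} := by
  apply Finite.of_injective
    (fun x : {p : Nat.Partition N × Finset ℕ // OPc m n k N p} =>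
      ((x.1.1, ⟨x.1.2, ?_⟩) : Nat.Partition N × {S : Finset ℕ // S ⊆ Finset.range (N + 1)}))
  · intro a b hab
    apply Subtype.ext
    have h1 := congrArg Prod.fst hab
    have h2 := congrArg (fun y => (Prod.snd y).1) hab
    exact Prod.ext h1 h2
  · intro i hi
    have h := x.2.2.2.1 hi
    rw [Multiset.mem_toFinset] at h
    have : i ≤ N := by
      rw [← x.1.1.parts_sum]
      exact Multiset.single_le_sum (fun a _ => Nat.zero_le a) i h
    exact Finset.mem_range.mpr (Nat.lt_succ_of_le this)

open scoped Classical in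
lemma card_split {α : Type*} (P Q : α → Prop) [Finite {a // P a}] :
    Nat.card {a // P a} = Nat.card {a // P a ∧ Q a} + Nat.card {a // P a ∧ ¬ Q a} := by
  haveI : Finite {a // P a ∧ Q a} :=
    Finite.of_equiv _ (Equiv.subtypeSubtypeEquivSubtypeInter P Q)
  haveI : Finite {a // P a ∧ ¬ Q a} :=
    Finite.of_equiv _ (Equiv.subtypeSubtypeEquivSubtypeInter P (fun a => ¬ Q a))
  rw [← Nat.card_congr (Equiv.subtypeSubtypeEquivSubtypeInter P Q),
    ← Nat.card_congr (Equiv.subtypeSubtypeEquivSubtypeInter P (fun a => ¬ Q a)),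
    ← Nat.card_sum]
  exact (Nat.card_congr (Equiv.sumCompl (fun x : {a // P a} => Q x.1))).symm

lemma overp_split (m k j M : ℕ) :
    overp (m+1) (k+1) j (M + (m+1)) = overp m (k+1) j (M + (m+1)) + overp (m+1) k j M +
      Nat.card {a : Nat.Partition (M + (m+1)) × Finset ℕ //
        OPc (m+1) (k+1) j (M + (m+1)) a ∧
        ((m+1) ∈ a.1.parts ∧ ((m+1) ∈ a.2 ∧ a.1.parts.count (m+1) = 1))} := by
  rw [overp_def, card_split (OPc (m+1) (k+1) j (M + (m+1))) (fun a => (m+1) ∈ a.1.parts)]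
  have e0 : Nat.card {a : Nat.Partition (M + (m+1)) × Finset ℕ //
      OPc (m+1) (k+1) j (M + (m+1)) a ∧ ¬ (m+1) ∈ a.1.parts} = overp m (k+1) j (M + (m+1)) := by
    rw [overp_def]
    apply Nat.card_congr
    apply Equiv.subtypeEquivRight
    rintro ⟨p, S⟩
    unfold OPc
    constructor
    · rintro ⟨⟨h1, h2⟩, hnot⟩
      refine ⟨fun i hi => ?_, h2⟩
      have := h1 i hi
      have : i ≠ m+1 := fun h => hnot (h ▸ hi)
      omega
    · rintro ⟨h1, h2⟩
      refine ⟨⟨fun i hi => le_trans (h1 i hi) (Nat.le_succ m), h2⟩, fun h => ?_⟩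
      have := h1 _ h
      omega
  have e1 : Nat.card {a : Nat.Partition (M + (m+1)) × Finset ℕ //
      (OPc (m+1) (k+1) j (M + (m+1)) a ∧ (m+1) ∈ a.1.parts) ∧
        ¬ ((m+1) ∈ a.2 ∧ a.1.parts.count (m+1) = 1)} = overp (m+1) k j M := by
    rw [overp_def]
    refine Nat.card_congr (Equiv.trans (Equiv.subtypeEquivRight ?_) (E1 m k j M))
    rintro ⟨p, S⟩
    tauto
  haveI : Finite {a : Nat.Partition (M + (m+1)) × Finset ℕ //
      OPc (m+1) (k+1) j (M + (m+1)) a ∧ (m+1) ∈ a.1.parts} :=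
    Finite.of_equiv _ (Equiv.subtypeSubtypeEquivSubtypeInter _ _)
  rw [card_split (fun a => OPc (m+1) (k+1) j (M + (m+1)) a ∧ (m+1) ∈ a.1.parts)
      (fun a => (m+1) ∈ a.2 ∧ a.1.parts.count (m+1) = 1)]
  · have e2 : Nat.card {a : Nat.Partition (M + (m+1)) × Finset ℕ //
        (OPc (m+1) (k+1) j (M + (m+1)) a ∧ (m+1) ∈ a.1.parts) ∧
          ((m+1) ∈ a.2 ∧ a.1.parts.count (m+1) = 1)} = Nat.card {a : Nat.Partition (M + (m+1)) × Finset ℕ //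
        OPc (m+1) (k+1) j (M + (m+1)) a ∧
        ((m+1) ∈ a.1.parts ∧ ((m+1) ∈ a.2 ∧ a.1.parts.count (m+1) = 1))} := by
      apply Nat.card_congr
      apply Equiv.subtypeEquivRight
      intro a
      tauto
    rw [e0, e1, e2]
    ring

lemma overp_rec1 (m k j M : ℕ) :
    overp (m+1) (k+1) (j+1) (M + (m+1)) =
      overp m (k+1) (j+1) (M + (m+1)) + overp (m+1) k (j+1) M + overp m k j M := by
  rw [overp_split, Nat.card_congr (Equiv.trans (Equiv.subtypeEquivRight (fun a => by tauto)) (E2 m k j M)), overp_def]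
  rfl

lemma overp_rec0 (m k M : ℕ) :
    overp (m+1) (k+1) 0 (M + (m+1)) = overp m (k+1) 0 (M + (m+1)) + overp (m+1) k 0 M := by
  rw [overp_split]
  have : Nat.card {a : Nat.Partition (M + (m+1)) × Finset ℕ //
      OPc (m+1) (k+1) 0 (M + (m+1)) a ∧
      ((m+1) ∈ a.1.parts ∧ ((m+1) ∈ a.2 ∧ a.1.parts.count (m+1) = 1))} = 0 := by
    rw [Nat.card_eq_zero]
    left
    constructor
    rintro ⟨⟨p, S⟩, ⟨-, -, -, h4⟩, -, hS, -⟩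
    dsimp only at h4 hS
    rw [Finset.card_eq_zero.mp h4] at hS
    exact absurd hS (Finset.notMem_empty _)
  rw [this]
  ring

/-- The over-(q,t)-binomial coefficient for the `m × n` rectangle, evaluated at
elements `q t` of a commutative ring. -/
noncomputable def Oqt {R : Type*} [CommRing R] (q t : R) (m n : ℕ) : R :=
  ∑ N ∈ range (m * n + 1), ∑ k ∈ range (n + 1), (overp m n k N : R) * t ^ k * q ^ N

section OqtLemmas

variable {R : Type*} [CommRing R] (q t : R)

lemma Oqt_eq_sum (m n A B : ℕ) (hA : m * n + 1 ≤ A) (hB : n + 1 ≤ B) :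
    Oqt q t m n = ∑ N ∈ range A, ∑ j ∈ range B, (overp m n j N : R) * t ^ j * q ^ N := by
  rw [Oqt]
  rw [Finset.sum_subset (Finset.range_subset_range.mpr hA)]
  · apply Finset.sum_congr rfl
    intro N _
    apply Finset.sum_subset (Finset.range_subset_range.mpr hB)
    intro j _ hj
    rw [overp_eq_zero_of_k (by simp at hj ⊢; omega)]
    simp
  · intro N _ hN
    apply Finset.sum_eq_zero
    intro j _
    rw [overp_eq_zero_of_lt (by simp at hN ⊢; omega)]
    simp

lemma Oqt_zero_n (m : ℕ) : Oqt q t m 0 = 1 := by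
  simp [Oqt, overp_zero_N]

lemma Oqt_zero_m (k : ℕ) : Oqt q t 0 k = 1 := by
  rw [Oqt]
  simp only [Nat.zero_mul, zero_add, range_one, Finset.sum_singleton, pow_zero, mul_one]
  rw [Finset.sum_eq_single 0]
  · simp [overp_zero_N]
  · intro j _ hj
    simp [overp_zero_N, hj]
  · intro h
    exact absurd (Finset.mem_range.mpr (Nat.succ_pos k)) h

lemma Oqt_rec (m k : ℕ) :
    Oqt q t (m+1) (k+1) =
      Oqt q t m (k+1) + q^(m+1) * Oqt q t (m+1) k + t * q^(m+1) * Oqt q t m k := by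
  have e1 : (m+1) * (k+1) + 1 = (m+1) + ((m+1) * k + 1) := by ring
  rw [Oqt_eq_sum q t (m+1) (k+1) ((m+1) + ((m+1)*k+1)) (k+2) (Nat.le_of_eq e1) (le_refl _),
      Oqt_eq_sum q t m (k+1) ((m+1) + ((m+1)*k+1)) (k+2)
        (by rw [← e1]; exact Nat.add_le_add_right (Nat.mul_le_mul_right _ (Nat.le_succ m)) 1) (le_refl _),
      Oqt_eq_sum q t (m+1) k ((m+1)*k+1) (k+2) (le_refl _) (Nat.le_succ _),
      Oqt_eq_sum q t m k ((m+1)*k+1) (k+1)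
        (Nat.add_le_add_right (Nat.mul_le_mul_right _ (Nat.le_succ m)) 1) (le_refl _)]
  rw [Finset.sum_range_add, Finset.sum_range_add
    (f := fun N => ∑ j ∈ range (k+2), (overp m (k+1) j N : R) * t^j * q^N)]
  have h1 : ∑ N ∈ range (m+1), ∑ j ∈ range (k+2), (overp (m+1) (k+1) j N : R) * t^j * q^N
      = ∑ N ∈ range (m+1), ∑ j ∈ range (k+2), (overp m (k+1) j N : R) * t^j * q^N := by
    refine Finset.sum_congr rfl fun N hN => Finset.sum_congr rfl fun j _ => ?_
    rw [overp_succ_small (Nat.lt_succ_iff.mp (Finset.mem_range.mp hN))]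
  have h2 : ∀ M' ∈ range ((m+1)*k+1),
      ∑ j ∈ range (k+2), (overp (m+1) (k+1) j ((m+1)+M') : R) * t^j * q^((m+1)+M')
      = (∑ j ∈ range (k+2), (overp m (k+1) j ((m+1)+M') : R) * t^j * q^((m+1)+M'))
        + q^(m+1) * (∑ j ∈ range (k+2), (overp (m+1) k j M' : R) * t^j * q^M')
        + t * q^(m+1) * (∑ j ∈ range (k+1), (overp m k j M' : R) * t^j * q^M') := by
    intro M' _
    have key : ∀ j, (overp (m+1) (k+1) j ((m+1)+M') : R)
        = (overp m (k+1) j ((m+1)+M') : R) + (overp (m+1) k j M' : R)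
          + (if j = 0 then 0 else (overp m k (j-1) M' : R)) := by
      intro j
      rcases j with _ | j
      · rw [if_pos rfl, add_comm (m+1) M', overp_rec0]
        push_cast; ring
      · rw [if_neg (Nat.succ_ne_zero j), add_comm (m+1) M', overp_rec1]
        push_cast; ring
    have step : ∑ j ∈ range (k+2), (overp (m+1) (k+1) j ((m+1)+M') : R) * t^j * q^((m+1)+M')
        = ∑ j ∈ range (k+2), ((overp m (k+1) j ((m+1)+M') : R) * t^j * q^((m+1)+M')
            + (overp (m+1) k j M' : R) * t^j * q^((m+1)+M')
            + (if j = 0 then 0 else (overp m k (j-1) M' : R)) * t^j * q^((m+1)+M')) := by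
      refine Finset.sum_congr rfl fun j _ => ?_
      rw [key j]; ring
    rw [step, Finset.sum_add_distrib, Finset.sum_add_distrib]
    congr 1
    · congr 1
      rw [Finset.mul_sum]
      refine Finset.sum_congr rfl fun j _ => ?_
      rw [pow_add]; ring
    · rw [Finset.sum_range_succ']
      have h0 : (if (0:ℕ) = 0 then (0:R) else (overp m k (0-1) M' : R)) * t ^ 0 * q ^ (m+1+M') = 0 := by
        simp
      rw [h0, add_zero, Finset.mul_sum]
      refine Finset.sum_congr rfl fun j _ => ?_
      rw [if_neg (Nat.succ_ne_zero j), Nat.succ_sub_one, pow_add, pow_succ]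
      ring
  rw [h1, Finset.sum_congr rfl h2, Finset.sum_add_distrib, Finset.sum_add_distrib,
    ← Finset.mul_sum, ← Finset.mul_sum]
  ring

lemma PS_base : (PowerSeries.mk fun k => Oqt q t 0 k * q ^ k) *
    (1 - PowerSeries.C (R := R) (q ^ 1) * PowerSeries.X) = 1 := by
  ext n
  have rearr : ∀ (f : PowerSeries R) (a : R),
      f * (PowerSeries.C (R := R) a * PowerSeries.X) = PowerSeries.C (R := R) a * (f * PowerSeries.X) :=
    fun f a => by ring
  rw [mul_sub, mul_one, map_sub, rearr, PowerSeries.coeff_C_mul]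
  cases n with
  | zero =>
    rw [PowerSeries.coeff_zero_mul_X]
    simp [Oqt_zero_m]
  | succ n =>
    rw [PowerSeries.coeff_succ_mul_X, PowerSeries.coeff_mk, PowerSeries.coeff_mk,
      Oqt_zero_m, Oqt_zero_m, PowerSeries.coeff_one]
    simp [pow_succ]
    ring

lemma PS_rec (m : ℕ) :
    (PowerSeries.mk fun k => Oqt q t (m+1) k * q ^ k) *
      (1 - PowerSeries.C (R := R) (q ^ (m+2)) * PowerSeries.X)
    = (PowerSeries.mk fun k => Oqt q t m k * q ^ k) *
      (1 + PowerSeries.C (R := R) (t * q ^ (m+2)) * PowerSeries.X) := by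
  ext n
  have rearr : ∀ (f : PowerSeries R) (a : R),
      f * (PowerSeries.C (R := R) a * PowerSeries.X) = PowerSeries.C (R := R) a * (f * PowerSeries.X) :=
    fun f a => by ring
  rw [mul_sub, mul_add, mul_one, mul_one, map_sub, map_add, rearr, rearr,
    PowerSeries.coeff_C_mul, PowerSeries.coeff_C_mul, PowerSeries.coeff_mk,
    PowerSeries.coeff_mk]
  cases n with
  | zero =>
    rw [PowerSeries.coeff_zero_mul_X, PowerSeries.coeff_zero_mul_X]
    simp [Oqt_zero_n]
  | succ n =>
    rw [PowerSeries.coeff_succ_mul_X, PowerSeries.coeff_succ_mul_X,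
      PowerSeries.coeff_mk, PowerSeries.coeff_mk, Oqt_rec q t m n]
    ring

end OqtLemmas

theorem stmt4 {R : Type*} [CommRing R] (q t : R) (n : ℕ) (hn : 0 < n) :
    (PowerSeries.mk fun k => Oqt q t (n - 1) k * q ^ k) *
        ∏ i ∈ range n, (1 - PowerSeries.C (R := R) (q ^ (i + 1)) * PowerSeries.X) =
      ∏ i ∈ range (n - 1), (1 + PowerSeries.C (R := R) (t * q ^ (i + 2)) * PowerSeries.X) := by
  obtain ⟨n', rfl⟩ : ∃ n', n = n' + 1 := ⟨n - 1, by omega⟩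
  simp only [Nat.add_sub_cancel]
  induction n' with
  | zero =>
    rw [Finset.prod_range_one, Finset.prod_range_zero]
    exact PS_base q t
  | succ n' ih =>
    rw [Finset.prod_range_succ]
    calc (PowerSeries.mk fun k => Oqt q t (n'+1) k * q ^ k) *
          ((∏ i ∈ range (n'+1), (1 - PowerSeries.C (R := R) (q ^ (i + 1)) * PowerSeries.X)) *
            (1 - PowerSeries.C (R := R) (q ^ (n'+1+1)) * PowerSeries.X))
        = ((PowerSeries.mk fun k => Oqt q t (n'+1) k * q ^ k) *
            (1 - PowerSeries.C (R := R) (q ^ (n'+2)) * PowerSeries.X)) *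
            ∏ i ∈ range (n'+1), (1 - PowerSeries.C (R := R) (q ^ (i + 1)) * PowerSeries.X) := by
          ring
      _ = ((PowerSeries.mk fun k => Oqt q t n' k * q ^ k) *
            (1 + PowerSeries.C (R := R) (t * q ^ (n'+2)) * PowerSeries.X)) *
            ∏ i ∈ range (n'+1), (1 - PowerSeries.C (R := R) (q ^ (i + 1)) * PowerSeries.X) := by
          rw [PS_rec]
      _ = ((PowerSeries.mk fun k => Oqt q t n' k * q ^ k) *
            ∏ i ∈ range (n'+1), (1 - PowerSeries.C (R := R) (q ^ (i + 1)) * PowerSeries.X)) *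
            (1 + PowerSeries.C (R := R) (t * q ^ (n'+2)) * PowerSeries.X) := by
          ring
      _ = (∏ i ∈ range n', (1 + PowerSeries.C (R := R) (t * q ^ (i + 2)) * PowerSeries.X)) *
            (1 + PowerSeries.C (R := R) (t * q ^ (n'+2)) * PowerSeries.X) := by
          rw [ih (Nat.succ_pos n')]
      _ = ∏ i ∈ range (n'+1), (1 + PowerSeries.C (R := R) (t * q ^ (i + 2)) * PowerSeries.X) :=
          (Finset.prod_range_succ _ _).symm
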